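/- Let ε₊ > 0, ε₋ > 0, a > 0, b > 0, c > 0. Then the following are equivalent: (i) for every natural number n ≥ 1, ε₋·tanh(a·nπ/c) = ε₊·tanh(b·nπ/c); (ii) ε₊ = ε₋ and a = b. In other words, λ = 0 solves the flat characteristic equation for every transverse mode n if and only if the contrast κ = ε₊/ε₋ equals 1 and a = b. -/

import Mathlib

open Real Filter Topology

private lemma tanh_formula (x : ℝ) :
    Real.tanh x = (1 - Real.exp (-(2*x))) / (1 + Real.exp (-(2*x))) := by
  have hu : Real.exp x * Real.exp (-x) = 1 := by
    rw [← Real.exp_add]; simp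
  have h2 : Real.exp (-(2*x)) = Real.exp (-x) * Real.exp (-x) := by
    rw [← Real.exp_add]; ring_nf
  have hc : Real.cosh x ≠ 0 := ne_of_gt (Real.cosh_pos x)
  have hd : (1 : ℝ) + Real.exp (-(2*x)) ≠ 0 := by positivity
  rw [Real.tanh_eq_sinh_div_cosh, Real.sinh_eq, Real.cosh_eq, div_eq_div_iff (by
    rw [Real.cosh_eq] at hc; exact hc) hd]
  rw [h2]
  nlinarith [Real.exp_pos x, Real.exp_pos (-x)]

private lemma tendsto_tanh_atTop : Tendsto Real.tanh atTop (𝓝 1) := by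
  have h0 : Tendsto (fun x : ℝ => Real.exp (-(2*x))) atTop (𝓝 0) := by
    apply Real.tendsto_exp_atBot.comp
    exact (tendsto_neg_atTop_atBot.comp (tendsto_id.const_mul_atTop two_pos))
  have : Tendsto (fun x : ℝ => (1 - Real.exp (-(2*x))) / (1 + Real.exp (-(2*x))))
      atTop (𝓝 ((1 - 0) / (1 + 0))) :=
    Tendsto.div ((tendsto_const_nhds).sub h0) ((tendsto_const_nhds).add h0) (by norm_num)
  have hfe : Real.tanh = fun x => (1 - Real.exp (-(2*x))) / (1 + Real.exp (-(2*x))) :=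
    funext tanh_formula
  rw [hfe]; simpa using this

private lemma tanh_strictMono : StrictMono Real.tanh := by
  intro x y hxy
  rw [Real.tanh_eq_sinh_div_cosh, Real.tanh_eq_sinh_div_cosh,
    div_lt_div_iff₀ (Real.cosh_pos x) (Real.cosh_pos y)]
  have h : Real.sinh x * Real.cosh y - Real.sinh y * Real.cosh x = Real.sinh (x - y) := by
    rw [Real.sinh_sub]; ring
  have : Real.sinh (x - y) < 0 := by
    rw [← Real.sinh_zero]
    exact Real.sinh_lt_sinh.mpr (by linarith)
  linarith

/-- λ = 0 solves the flat characteristic equation for every transverse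
mode n ≥ 1 if and only if the contrast is critical (ε₊ = ε₋) and a = b. -/
theorem stmt_7 (εp εm a b c : ℝ) (hεp : 0 < εp) (hεm : 0 < εm)
    (ha : 0 < a) (hb : 0 < b) (hc : 0 < c) :
    (∀ n : ℕ, 1 ≤ n →
        εm * Real.tanh (a * ((n : ℝ) * π / c)) = εp * Real.tanh (b * ((n : ℝ) * π / c)))
      ↔ (εp = εm ∧ a = b) := by
  have hπ : (0:ℝ) < π := Real.pi_pos
  constructor
  · intro h
    -- limits
    have harg : ∀ d : ℝ, 0 < d →
        Tendsto (fun n : ℕ => d * ((n : ℝ) * π / c)) atTop atTop := by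
      intro d hd
      have : Tendsto (fun n : ℕ => (n : ℝ)) atTop atTop := tendsto_natCast_atTop_atTop
      have h2 : Tendsto (fun n : ℕ => (n : ℝ) * (d * π / c)) atTop atTop :=
        this.atTop_mul_const (by positivity)
      refine h2.congr (fun n => by ring)
    have hlim : ∀ d : ℝ, 0 < d →
        Tendsto (fun n : ℕ => Real.tanh (d * ((n : ℝ) * π / c))) atTop (𝓝 1) :=
      fun d hd => tendsto_tanh_atTop.comp (harg d hd)
    have hm : Tendsto (fun n : ℕ => εm * Real.tanh (a * ((n : ℝ) * π / c))) atTop (𝓝 εm) := by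
      simpa using (hlim a ha).const_mul εm
    have hp : Tendsto (fun n : ℕ => εp * Real.tanh (b * ((n : ℝ) * π / c))) atTop (𝓝 εp) := by
      simpa using (hlim b hb).const_mul εp
    have heq : εm = εp := by
      refine tendsto_nhds_unique (hm.congr' ?_) hp
      filter_upwards [eventually_ge_atTop 1] with n hn using h n hn
    have h1 := h 1 le_rfl
    rw [heq] at h1
    have htanh : Real.tanh (a * ((1:ℕ) * π / c)) = Real.tanh (b * ((1:ℕ) * π / c)) :=
      mul_left_cancel₀ (ne_of_gt hεp) h1
    have hab : a * ((1:ℕ) * π / c) = b * ((1:ℕ) * π / c) :=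
      tanh_strictMono.injective htanh
    have : a = b := by
      have hpc : (0:ℝ) < π / c := by positivity
      field_simp at hab
      exact hab
    exact ⟨heq.symm, this⟩
  · rintro ⟨h1, h2⟩ n hn
    rw [h1, h2]
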